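/- For every digraph G on n vertices, D_0(G) ≥ log* n − log* log* n − 1 (equivalently, D_0(G) + log* log* n + 1 ≥ log* n). -/

import Mathlib

namespace PaperFO

/-- First-order formulas in a language with equality `eq` and one binary
relation symbol `rel` (adjacency `~` for graphs, the arc relation `↦` for
digraphs).  Variables are indexed by natural numbers (variable `xᵢ` of the
paper corresponds to `i - 1 : ℕ`). -/
inductive Fml : Type
  | eq : ℕ → ℕ → Fml
  | rel : ℕ → ℕ → Fml
  | not : Fml → Fml
  | and : Fml → Fml → Fml
  | or : Fml → Fml → Fml
  | all : ℕ → Fml → Fml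
  | ex : ℕ → Fml → Fml

namespace Fml

/-- Truth of a formula in the structure `(V, r)` under the assignment `σ`. -/
def eval {V : Type} (r : V → V → Prop) (σ : ℕ → V) : Fml → Prop
  | eq i j => σ i = σ j
  | rel i j => r (σ i) (σ j)
  | not φ => ¬ eval r σ φ
  | and φ ψ => eval r σ φ ∧ eval r σ ψ
  | or φ ψ => eval r σ φ ∨ eval r σ ψ
  | all i φ => ∀ v : V, eval r (Function.update σ i v) φ
  | ex i φ => ∃ v : V, eval r (Function.update σ i v) φ

/-- The free variables of a formula. -/
def freeVars : Fml → Finset ℕ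
  | eq i j => {i, j}
  | rel i j => {i, j}
  | not φ => freeVars φ
  | and φ ψ => freeVars φ ∪ freeVars ψ
  | or φ ψ => freeVars φ ∪ freeVars ψ
  | all i φ => (freeVars φ).erase i
  | ex i φ => (freeVars φ).erase i

/-- A sentence is a formula without free variables. -/
def IsSentence (φ : Fml) : Prop := φ.freeVars = ∅

/-- The quantifier depth (= quantifier rank) of a formula: the maximum
number of nested quantifiers. -/
def depth : Fml → ℕ
  | eq _ _ => 0
  | rel _ _ => 0
  | not φ => depth φ
  | and φ ψ => max (depth φ) (depth ψ)
  | or φ ψ => max (depth φ) (depth ψ)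
  | all _ φ => depth φ + 1
  | ex _ φ => depth φ + 1

/-- A formula is atomic if it is of the form `x = y` or `x ~ y`. -/
def IsAtomic : Fml → Prop
  | eq _ _ => True
  | rel _ _ => True
  | _ => False

/-- Negations occur only in front of atomic subformulas. -/
def NegAtomic : Fml → Prop
  | eq _ _ => True
  | rel _ _ => True
  | not φ => IsAtomic φ
  | and φ ψ => NegAtomic φ ∧ NegAtomic ψ
  | or φ ψ => NegAtomic φ ∧ NegAtomic ψ
  | all _ φ => NegAtomic φ
  | ex _ φ => NegAtomic φ

/-- The set of maximal sequences of nested quantifiers of a formula,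
recorded as lists of Booleans read from the outermost quantifier inwards
(`true` = `∃`, `false` = `∀`).  Every sequence of nested quantifiers of the
formula is a (contiguous) subsequence of one of these. -/
def qstrings : Fml → Set (List Bool)
  | eq _ _ => {[]}
  | rel _ _ => {[]}
  | not φ => qstrings φ
  | and φ ψ => qstrings φ ∪ qstrings ψ
  | or φ ψ => qstrings φ ∪ qstrings ψ
  | all _ φ => (List.cons false) '' qstrings φ
  | ex _ φ => (List.cons true) '' qstrings φ

end Fml

/-- The number of quantifier alternations (occurrences of `∀∃` or `∃∀`) in a
sequence of nested quantifiers. -/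
def altCount : List Bool → ℕ
  | [] => 0
  | [_] => 0
  | a :: b :: l => (if a = b then 0 else 1) + altCount (b :: l)

namespace Fml

/-- Every sequence of nested quantifiers has at most `a` quantifier
alternations. -/
def AltLe (φ : Fml) (a : ℕ) : Prop := ∀ s ∈ φ.qstrings, altCount s ≤ a

/-- An `a`-alternating formula: negations occur only in front of atomic
subformulas and every sequence of nested quantifiers has at most `a`
quantifier alternations. -/
def AltFml (a : ℕ) (φ : Fml) : Prop := φ.NegAtomic ∧ φ.AltLe a

/-- A 0-alternating formula: negations occur only in front of atomic
subformulas and no sequence of nested quantifiers contains a quantifier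
alternation. -/
def ZeroAlt (φ : Fml) : Prop := φ.NegAtomic ∧ φ.AltLe 0

end Fml

/-- `logStar n` is the minimum number of iterations of the binary logarithm
needed to bring `n` to `1` or below. -/
def logStar (n : ℕ) : ℕ :=
  if h : n ≤ 1 then 0 else logStar (Nat.log 2 n) + 1
decreasing_by exact Nat.log_lt_self 2 (by omega)

/-- The tower function: `tower 0 = 1`, `tower (i+1) = 2 ^ tower i`. -/
def tower : ℕ → ℕ
  | 0 => 1
  | i + 1 => 2 ^ tower i

end PaperFO

namespace PaperFO

/-- A sentence is true on the digraph `(V, r)` (digraphs interpret `Fml.rel`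
as the arc relation `↦`). -/
def DModels {V : Type} (r : V → V → Prop) (φ : Fml) : Prop :=
  ∀ σ : ℕ → V, φ.eval r σ

/-- Isomorphism of digraphs. -/
def DIso {V W : Type} (r : V → V → Prop) (r' : W → W → Prop) : Prop :=
  ∃ e : V ≃ W, ∀ a b : V, r a b ↔ r' (e a) (e b)

/-- The sentence `φ` defines the digraph `(V, r)`: it is a sentence, it is
true on `(V, r)`, and it fails on every (finite, nonempty) digraph not
isomorphic to `(V, r)`. -/
def DDefines {V : Type} (r : V → V → Prop) (φ : Fml) : Prop :=
  φ.IsSentence ∧ DModels r φ ∧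
    ∀ (W : Type) (_ : Fintype W) (_ : Nonempty W) (r' : W → W → Prop),
      ¬ DIso r r' → ¬ DModels r' φ

end PaperFO

namespace PaperFO

/-! ### Auxiliary development for `statement_2` -/

section Aux2

attribute [local instance] Classical.propDecidable

/-! #### Iterated exponentials -/

/-- Iterated base-2 exponential. -/
def expIter : ℕ → ℕ → ℕ
  | 0, m => m
  | k+1, m => 2 ^ expIter k m

lemma one_le_expIter (k : ℕ) {m : ℕ} (hm : 1 ≤ m) : 1 ≤ expIter k m := by
  induction k with
  | zero => exact hm
  | succ k ih => exact Nat.one_le_two_pow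

lemma expIter_mono_arg (k : ℕ) {m m' : ℕ} (h : m ≤ m') : expIter k m ≤ expIter k m' := by
  induction k with
  | zero => exact h
  | succ k ih => exact Nat.pow_le_pow_right (by norm_num) ih

lemma expIter_le_succ (k m : ℕ) : expIter k m ≤ expIter (k+1) m := by
  induction k with
  | zero => exact (Nat.lt_two_pow_self (n := m)).le
  | succ k ih => exact Nat.pow_le_pow_right (by norm_num) ih

lemma expIter_mono_k {k k' : ℕ} (h : k ≤ k') (m : ℕ) : expIter k m ≤ expIter k' m := by
  induction k' with
  | zero => cases Nat.le_zero.mp h; exact le_rfl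
  | succ k' ih =>
    rcases Nat.lt_or_ge k (k'+1) with h1 | h1
    · exact le_trans (ih (Nat.lt_succ_iff.mp h1)) (expIter_le_succ k' m)
    · have : k = k'+1 := le_antisymm h h1
      subst this; exact le_rfl

lemma expIter_add_le (k m c : ℕ) : expIter k m + c ≤ expIter k (m + c) := by
  induction k with
  | zero => exact le_rfl
  | succ k ih =>
    have h1 : c < 2 ^ c := Nat.lt_two_pow_self (n := c)
    have h2 : 1 ≤ 2 ^ expIter k m := Nat.one_le_two_pow
    calc 2 ^ expIter k m + c ≤ 2 ^ expIter k m * 2 ^ c := by nlinarith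
      _ = 2 ^ (expIter k m + c) := by rw [pow_add]
      _ ≤ 2 ^ expIter k (m + c) := Nat.pow_le_pow_right (by norm_num) ih

lemma mul_expIter_add_le (k x a b : ℕ) (hx : 1 ≤ x) :
    a * expIter k x + b ≤ expIter k ((a + b + 2) * x) := by
  cases k with
  | zero => show a * x + b ≤ (a + b + 2) * x; nlinarith
  | succ k =>
    show a * 2 ^ expIter k x + b ≤ 2 ^ expIter k ((a + b + 2) * x)
    have h2 : 1 ≤ 2 ^ expIter k x := Nat.one_le_two_pow
    have h3 : a + b ≤ 2 ^ (a + b) := (Nat.lt_two_pow_self (n := a+b)).le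
    calc a * 2 ^ expIter k x + b ≤ (a + b) * 2 ^ expIter k x := by nlinarith
      _ ≤ 2 ^ (a + b) * 2 ^ expIter k x := Nat.mul_le_mul_right _ h3
      _ = 2 ^ (expIter k x + (a + b)) := by rw [← pow_add, add_comm]
      _ ≤ 2 ^ expIter k (x + (a + b)) := Nat.pow_le_pow_right (by norm_num) (expIter_add_le ..)
      _ ≤ 2 ^ expIter k ((a + b + 2) * x) := by
          refine Nat.pow_le_pow_right (by norm_num) (expIter_mono_arg _ ?_)
          nlinarith

/-! #### `logStar` lemmas -/

lemma logStar_le_log_add_one (m : ℕ) : logStar m ≤ logStar (Nat.log 2 m) + 1 := by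
  rw [logStar]
  split
  · exact Nat.zero_le _
  · exact le_rfl

lemma logStar_eq_of_lt {m : ℕ} (hm : ¬ m ≤ 1) : logStar m = logStar (Nat.log 2 m) + 1 := by
  rw [logStar]; exact dif_neg hm

lemma logStar_mono : ∀ {n m : ℕ}, m ≤ n → logStar m ≤ logStar n := by
  intro n
  induction n using Nat.strong_induction_on with
  | _ n ih =>
    intro m h
    by_cases hm : m ≤ 1
    · have : logStar m = 0 := by rw [logStar]; exact dif_pos hm
      omega
    · have hn : ¬ n ≤ 1 := by omega
      rw [logStar_eq_of_lt hm, logStar_eq_of_lt hn]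
      have hlt : Nat.log 2 n < n := Nat.log_lt_self 2 (by omega)
      have hle : Nat.log 2 m ≤ Nat.log 2 n := Nat.log_mono_right h
      exact Nat.succ_le_succ (ih _ hlt hle)

lemma logStar_two_pow (m : ℕ) : logStar (2 ^ m) ≤ logStar m + 1 := by
  rcases Nat.eq_zero_or_pos m with rfl | hm
  · simp only [pow_zero]
    rw [logStar, dif_pos (by norm_num)]
    exact Nat.zero_le _
  · have h2 : ¬ (2:ℕ) ^ m ≤ 1 := by
      have : 2 ^ 1 ≤ 2 ^ m := Nat.pow_le_pow_right (by norm_num) hm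
      omega
    rw [logStar_eq_of_lt h2, Nat.log_pow (by norm_num : (1:ℕ) < 2)]

lemma logStar_expIter (k m : ℕ) : logStar (expIter k m) ≤ k + logStar m := by
  induction k with
  | zero => simp [expIter]
  | succ k ih =>
    calc logStar (2 ^ expIter k m) ≤ logStar (expIter k m) + 1 := logStar_two_pow _
      _ ≤ (k + logStar m) + 1 := by omega
      _ = (k+1) + logStar m := by omega

lemma ten_bound : ∀ d : ℕ, 10 * d + 5 ≤ 2 ^ (d + 3)
  | 0 => by norm_num
  | 1 => by norm_num
  | (d+2) => by
    have h := ten_bound (d+1)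
    have h16 : (16:ℕ) ≤ 2 ^ (d + 4) := by
      calc (16:ℕ) = 2 ^ 4 := by norm_num
        _ ≤ 2 ^ (d+4) := Nat.pow_le_pow_right (by norm_num) (by omega)
    have he : (2:ℕ) ^ (d + 1 + 3) = 2 ^ (d + 4) := by ring
    have : (2:ℕ) ^ (d + 2 + 3) = 2 * 2 ^ (d + 4) := by ring
    omega

lemma five_sq_bound (d : ℕ) : 5 * d * d < 2 ^ (d + 3) := by
  induction d with
  | zero => norm_num
  | succ d ih =>
    have h10 := ten_bound d
    have he : (2:ℕ) ^ (d + 1 + 3) = 2 ^ (d+3) + 2 ^ (d+3) := by ring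
    have : 5 * (d+1) * (d+1) = 5 * d * d + (10 * d + 5) := by ring
    omega

lemma logStar_five_sq (d : ℕ) (hd : 1 ≤ d) : logStar (5 * d * d) ≤ logStar (d + 2) + 1 := by
  have h5 : 5 * d * d < 2 ^ (d + 3) := five_sq_bound d
  have hne : 5 * d * d ≠ 0 := by positivity
  have hlog : Nat.log 2 (5 * d * d) < d + 3 :=
    (Nat.log_lt_iff_lt_pow (by norm_num) hne).mpr h5
  calc logStar (5 * d * d) ≤ logStar (Nat.log 2 (5 * d * d)) + 1 := logStar_le_log_add_one _
    _ ≤ logStar (d + 2) + 1 := by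
        have := logStar_mono (show Nat.log 2 (5 * d * d) ≤ d + 2 by omega)
        omega

/-! #### Formula lemmas -/

open Fml in
lemma eval_congr {V : Type} (r : V → V → Prop) :
    ∀ (φ : Fml) (σ σ' : ℕ → V), (∀ i ∈ φ.freeVars, σ i = σ' i) →
      (φ.eval r σ ↔ φ.eval r σ') := by
  intro φ
  induction φ with
  | eq i j =>
    intro σ σ' h
    simp only [Fml.eval]
    rw [h i (by simp [freeVars]), h j (by simp [freeVars])]
  | rel i j =>
    intro σ σ' h
    simp only [Fml.eval]
    rw [h i (by simp [freeVars]), h j (by simp [freeVars])]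
  | not ψ ih =>
    intro σ σ' h
    simp only [Fml.eval]
    rw [ih σ σ' h]
  | and ψ χ ih1 ih2 =>
    intro σ σ' h
    simp only [Fml.eval]
    rw [ih1 σ σ' fun i hi => h i (by simp [freeVars, hi]),
        ih2 σ σ' fun i hi => h i (by simp [freeVars, hi])]
  | or ψ χ ih1 ih2 =>
    intro σ σ' h
    simp only [Fml.eval]
    rw [ih1 σ σ' fun i hi => h i (by simp [freeVars, hi]),
        ih2 σ σ' fun i hi => h i (by simp [freeVars, hi])]
  | all i ψ ih =>
    intro σ σ' h
    simp only [Fml.eval]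
    refine forall_congr' fun v => ih _ _ fun i' hi' => ?_
    by_cases hEq : i' = i
    · subst hEq; simp
    · simp only [Function.update_of_ne hEq]
      exact h i' (Finset.mem_erase.mpr ⟨hEq, hi'⟩)
  | ex i ψ ih =>
    intro σ σ' h
    simp only [Fml.eval]
    refine exists_congr fun v => ih _ _ fun i' hi' => ?_
    by_cases hEq : i' = i
    · subst hEq; simp
    · simp only [Function.update_of_ne hEq]
      exact h i' (Finset.mem_erase.mpr ⟨hEq, hi'⟩)

lemma qstrings_nonempty : ∀ φ : Fml, φ.qstrings.Nonempty := by
  intro φ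
  induction φ with
  | eq i j => exact ⟨[], rfl⟩
  | rel i j => exact ⟨[], rfl⟩
  | not ψ ih => exact ih
  | and ψ χ ih1 ih2 => exact ih1.mono Set.subset_union_left
  | or ψ χ ih1 ih2 => exact ih1.mono Set.subset_union_left
  | all i ψ ih => exact ih.image _
  | ex i ψ ih => exact ih.image _

lemma freeVars_nonempty_of_atomic : ∀ φ : Fml, φ.IsAtomic → φ.freeVars ≠ ∅ := by
  intro φ hφ
  cases φ with
  | eq i j => simp [Fml.freeVars]
  | rel i j => simp [Fml.freeVars]
  | _ => simp [Fml.IsAtomic] at hφ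

lemma one_le_depth_of_sentence : ∀ φ : Fml, φ.freeVars = ∅ → 1 ≤ φ.depth := by
  intro φ
  induction φ with
  | eq i j => intro h; simp [Fml.freeVars] at h
  | rel i j => intro h; simp [Fml.freeVars] at h
  | not ψ ih => exact fun h => ih h
  | and ψ χ ih1 ih2 =>
    intro h
    simp only [Fml.freeVars, Finset.union_eq_empty] at h
    exact le_trans (ih1 h.1) (le_max_left _ _)
  | or ψ χ ih1 ih2 =>
    intro h
    simp only [Fml.freeVars, Finset.union_eq_empty] at h
    exact le_trans (ih1 h.1) (le_max_left _ _)
  | all i ψ ih => intro _; simp [Fml.depth]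
  | ex i ψ ih => intro _; simp [Fml.depth]

lemma altCount_cons_eq_zero {a : Bool} : ∀ {l : List Bool}, altCount (a :: l) = 0 →
    ∀ b ∈ l, b = a := by
  intro l
  induction l generalizing a with
  | nil => intro _ b hb; simp at hb
  | cons c l ih =>
    intro h b hb
    have h' : (if a = c then 0 else 1) + altCount (c :: l) = 0 := h
    have hac : a = c := by by_contra hne; simp [hne] at h'
    subst hac
    have h0 : altCount (a :: l) = 0 := by omega
    rcases List.mem_cons.mp hb with rfl | hb
    · rfl
    · exact ih h0 b hb

/-- All quantifiers existential. -/
def AllEx (φ : Fml) : Prop := ∀ s ∈ φ.qstrings, false ∉ s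

/-- All quantifiers universal. -/
def AllAll (φ : Fml) : Prop := ∀ s ∈ φ.qstrings, true ∉ s

lemma allEx_of_zeroAlt_ex {i : ℕ} {ψ : Fml} (h : Fml.AltLe (Fml.ex i ψ) 0) :
    AllEx (Fml.ex i ψ) := by
  intro s hs
  obtain ⟨s0, hs0, rfl⟩ := hs
  intro hf
  have h0 : altCount (true :: s0) = 0 := Nat.le_zero.mp (h _ ⟨s0, hs0, rfl⟩)
  rcases List.mem_cons.mp hf with h' | h'
  · exact Bool.noConfusion h'
  · exact Bool.noConfusion (altCount_cons_eq_zero h0 false h')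

lemma allAll_of_zeroAlt_all {i : ℕ} {ψ : Fml} (h : Fml.AltLe (Fml.all i ψ) 0) :
    AllAll (Fml.all i ψ) := by
  intro s hs
  obtain ⟨s0, hs0, rfl⟩ := hs
  intro hf
  have h0 : altCount (false :: s0) = 0 := Nat.le_zero.mp (h _ ⟨s0, hs0, rfl⟩)
  rcases List.mem_cons.mp hf with h' | h'
  · exact Bool.noConfusion h'
  · exact Bool.noConfusion (altCount_cons_eq_zero h0 true h')

lemma allEx_of_cons {i : ℕ} {ψ : Fml} (h : AllEx (Fml.ex i ψ)) : AllEx ψ := by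
  intro s hs hf
  exact h (true :: s) ⟨s, hs, rfl⟩ (List.mem_cons_of_mem _ hf)

lemma allAll_of_cons {i : ℕ} {ψ : Fml} (h : AllAll (Fml.all i ψ)) : AllAll ψ := by
  intro s hs hf
  exact h (false :: s) ⟨s, hs, rfl⟩ (List.mem_cons_of_mem _ hf)

/-! #### Rank types -/

/-- The space of rank-`k` types of `j`-tuples. -/
def TS : ℕ → ℕ → Type
  | 0, j => Fin j → Fin j → Bool × Bool
  | k+1, j => (Fin j → Fin j → Bool × Bool) × (TS k (j+1) → Bool)

noncomputable instance instFintypeTS : ∀ (k j : ℕ), Fintype (TS k j)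
  | 0, j => inferInstanceAs (Fintype (Fin j → Fin j → Bool × Bool))
  | k+1, j =>
    letI := instFintypeTS k (j+1)
    inferInstanceAs (Fintype ((Fin j → Fin j → Bool × Bool) × (TS k (j+1) → Bool)))

variable {V : Type} (r : V → V → Prop)

/-- The atomic type of a tuple. -/
noncomputable def atomicTy {j : ℕ} (w : Fin j → V) : Fin j → Fin j → Bool × Bool :=
  fun a b => (decide (w a = w b), decide (r (w a) (w b)))

/-- The rank-`k` type of a tuple. -/
noncomputable def typ : (k j : ℕ) → (Fin j → V) → TS k j
  | 0, _, w => atomicTy r w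
  | k+1, j, w => (atomicTy r w, fun t => decide (∃ x : V, typ k (j+1) (Fin.snoc w x) = t))

lemma typ_atomic : ∀ (k j : ℕ) (vb wb : Fin j → V), typ r k j vb = typ r k j wb →
    atomicTy r vb = atomicTy r wb
  | 0, _, _, _, h => h
  | k+1, _, _, _, h => congrArg Prod.fst h

lemma atomic_spec {j : ℕ} {vb wb : Fin j → V} (h : atomicTy r vb = atomicTy r wb)
    (a b : Fin j) :
    (vb a = vb b ↔ wb a = wb b) ∧ (r (vb a) (vb b) ↔ r (wb a) (wb b)) := by
  have h1 := congrFun (congrFun h a) b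
  simp only [atomicTy, Prod.mk.injEq, decide_eq_decide] at h1
  exact h1

lemma typ_forth {k j : ℕ} {vb wb : Fin j → V}
    (h : typ r (k+1) j vb = typ r (k+1) j wb) (a : V) :
    ∃ b : V, typ r k (j+1) (Fin.snoc vb a) = typ r k (j+1) (Fin.snoc wb b) := by
  have h2 : (fun t => decide (∃ x : V, typ r k (j+1) (Fin.snoc vb x) = t)) =
      (fun t => decide (∃ x : V, typ r k (j+1) (Fin.snoc wb x) = t)) :=
    congrArg Prod.snd h
  have h3 := congrFun h2 (typ r k (j+1) (Fin.snoc vb a))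
  have h4 : decide (∃ x : V, typ r k (j+1) (Fin.snoc vb x) =
      typ r k (j+1) (Fin.snoc vb a)) = true := decide_eq_true ⟨a, rfl⟩
  rw [h4] at h3
  obtain ⟨b, hb⟩ := of_decide_eq_true h3.symm
  exact ⟨b, hb.symm⟩

/-! #### Saturated sets of representatives -/

variable [Fintype V] [Nonempty V] (d : ℕ)

/-- A representative realizing type `t` over the tuple `w`, if one exists. -/
noncomputable def resp (k j : ℕ) (w : Fin j → V) (t : TS k (j+1)) : V :=
  if h : ∃ b : V, typ r k (j+1) (Fin.snoc w b) = t then h.choose else Classical.arbitrary V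

/-- The tuples of representatives reachable in `j` rounds of the `d`-round game. -/
noncomputable def reach : (j : ℕ) → Finset (Fin j → V)
  | 0 => Finset.univ
  | j+1 => (reach j).biUnion fun w =>
      Finset.image (fun t : TS (d - j - 1) (j+1) => Fin.snoc w (resp r (d - j - 1) j w t))
        Finset.univ

/-- All vertices appearing in reachable tuples. -/
noncomputable def allR : ℕ → Finset V
  | 0 => ∅
  | j+1 => allR j ∪ (reach r d (j+1)).biUnion fun w => Finset.image w Finset.univ

lemma allR_mono : ∀ {j j' : ℕ}, j ≤ j' → allR r d j ⊆ allR r d j' := by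
  intro j j' h
  induction j' with
  | zero => cases Nat.le_zero.mp h; exact Finset.Subset.refl _
  | succ j' ih =>
    rcases Nat.lt_or_ge j (j'+1) with h1 | h1
    · exact (ih (Nat.lt_succ_iff.mp h1)).trans Finset.subset_union_left
    · have : j = j'+1 := le_antisymm h h1
      subst this; exact Finset.Subset.refl _

lemma mem_allR {j : ℕ} (hj : j ≤ d) {w : Fin j → V} (hw : w ∈ reach r d j)
    (i : Fin j) : w i ∈ allR r d d := by
  cases j with
  | zero => exact i.elim0
  | succ j =>
    refine allR_mono r d hj ?_
    refine Finset.mem_union_right _ (Finset.mem_biUnion.mpr ⟨w, hw, ?_⟩)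
    exact Finset.mem_image.mpr ⟨i, Finset.mem_univ _, rfl⟩

lemma reach_forth {j k : ℕ} (hk : k = d - j - 1) {vb wb : Fin j → V}
    (ht : typ r (k+1) j vb = typ r (k+1) j wb) (hw : wb ∈ reach r d j) (a : V) :
    ∃ b : V, typ r k (j+1) (Fin.snoc vb a) = typ r k (j+1) (Fin.snoc wb b) ∧
      Fin.snoc wb b ∈ reach r d (j+1) := by
  subst hk
  obtain ⟨b0, hb0⟩ := typ_forth r ht a
  set t := typ r (d - j - 1) (j+1) (Fin.snoc wb b0) with hT
  have hex : ∃ b : V, typ r (d - j - 1) (j+1) (Fin.snoc wb b) = t := ⟨b0, rfl⟩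
  refine ⟨resp r (d - j - 1) j wb t, ?_, ?_⟩
  · have hr : typ r (d - j - 1) (j+1) (Fin.snoc wb (resp r (d - j - 1) j wb t)) = t := by
      rw [resp, dif_pos hex]; exact hex.choose_spec
    rw [hr, hb0]
  · show Fin.snoc wb (resp r (d - j - 1) j wb t) ∈ reach r d (j+1)
    have : reach r d (j+1) = (reach r d j).biUnion fun w =>
        Finset.image (fun t : TS (d - j - 1) (j+1) =>
          Fin.snoc w (resp r (d - j - 1) j w t)) Finset.univ := rfl
    rw [this]
    exact Finset.mem_biUnion.mpr ⟨wb, hw,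
      Finset.mem_image.mpr ⟨t, Finset.mem_univ _, rfl⟩⟩

/-! #### Transfer lemmas -/

open Fml in
lemma sigma_transfer {W : Type} (r' : W → W → Prop) (D : ℕ)
    (Sys : ∀ j : ℕ, (Fin j → V) → (Fin j → W) → Prop)
    (P1 : ∀ j vb wb, Sys j vb wb → ∀ a b : Fin j,
      (vb a = vb b ↔ wb a = wb b) ∧ (r (vb a) (vb b) ↔ r' (wb a) (wb b)))
    (P2 : ∀ j vb wb, j < D → Sys j vb wb → ∀ a : V, ∃ b : W,
      Sys (j+1) (Fin.snoc vb a) (Fin.snoc wb b)) :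
    ∀ φ : Fml, φ.NegAtomic → AllEx φ → ∀ j : ℕ, φ.depth + j ≤ D →
      ∀ (vb : Fin j → V) (wb : Fin j → W), Sys j vb wb →
      ∀ (σ : ℕ → V) (τ : ℕ → W),
        (∀ i ∈ φ.freeVars, ∃ idx : Fin j, σ i = vb idx ∧ τ i = wb idx) →
        φ.eval r σ → φ.eval r' τ := by
  intro φ
  induction φ with
  | eq i i' =>
    intro _ _ j _ vb wb hS σ τ hfv hev
    obtain ⟨x, hx1, hx2⟩ := hfv i (by simp [freeVars])
    obtain ⟨y, hy1, hy2⟩ := hfv i' (by simp [freeVars])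
    simp only [Fml.eval] at hev ⊢
    rw [hx2, hy2, ← (P1 j vb wb hS x y).1, ← hx1, ← hy1]
    exact hev
  | rel i i' =>
    intro _ _ j _ vb wb hS σ τ hfv hev
    obtain ⟨x, hx1, hx2⟩ := hfv i (by simp [freeVars])
    obtain ⟨y, hy1, hy2⟩ := hfv i' (by simp [freeVars])
    simp only [Fml.eval] at hev ⊢
    rw [hx2, hy2, ← (P1 j vb wb hS x y).2, ← hx1, ← hy1]
    exact hev
  | not ψ ih =>
    intro hNA _ j _ vb wb hS σ τ hfv hev
    cases ψ with
    | eq i i' =>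
      obtain ⟨x, hx1, hx2⟩ := hfv i (by simp [freeVars])
      obtain ⟨y, hy1, hy2⟩ := hfv i' (by simp [freeVars])
      simp only [Fml.eval] at hev ⊢
      rw [hx2, hy2, ← (P1 j vb wb hS x y).1, ← hx1, ← hy1]
      exact hev
    | rel i i' =>
      obtain ⟨x, hx1, hx2⟩ := hfv i (by simp [freeVars])
      obtain ⟨y, hy1, hy2⟩ := hfv i' (by simp [freeVars])
      simp only [Fml.eval] at hev ⊢
      rw [hx2, hy2, ← (P1 j vb wb hS x y).2, ← hx1, ← hy1]
      exact hev
    | _ => simp [Fml.NegAtomic, Fml.IsAtomic] at hNA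
  | and ψ χ ih1 ih2 =>
    intro hNA hAE j hj vb wb hS σ τ hfv hev
    simp only [Fml.eval] at hev ⊢
    simp only [Fml.depth, max_le_iff] at hj
    refine ⟨ih1 hNA.1 (fun s hs => hAE s (Or.inl hs)) j (by omega) vb wb hS σ τ
      (fun i hi => hfv i (by simp [freeVars, hi])) hev.1,
      ih2 hNA.2 (fun s hs => hAE s (Or.inr hs)) j (by omega) vb wb hS σ τ
      (fun i hi => hfv i (by simp [freeVars, hi])) hev.2⟩
  | or ψ χ ih1 ih2 =>
    intro hNA hAE j hj vb wb hS σ τ hfv hev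
    simp only [Fml.eval] at hev ⊢
    simp only [Fml.depth, max_le_iff] at hj
    rcases hev with hev | hev
    · exact Or.inl (ih1 hNA.1 (fun s hs => hAE s (Or.inl hs)) j (by omega) vb wb hS σ τ
        (fun i hi => hfv i (by simp [freeVars, hi])) hev)
    · exact Or.inr (ih2 hNA.2 (fun s hs => hAE s (Or.inr hs)) j (by omega) vb wb hS σ τ
        (fun i hi => hfv i (by simp [freeVars, hi])) hev)
  | ex i ψ ih =>
    intro hNA hAE j hj vb wb hS σ τ hfv hev
    simp only [Fml.eval] at hev ⊢
    obtain ⟨a, ha⟩ := hev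
    simp only [Fml.depth] at hj
    obtain ⟨b, hSb⟩ := P2 j vb wb (by omega) hS a
    refine ⟨b, ih hNA (allEx_of_cons hAE) (j+1) (by omega) _ _ hSb _ _ ?_ ha⟩
    intro i' hi'
    by_cases hEq : i' = i
    · subst hEq
      exact ⟨Fin.last j, by simp [Fin.snoc_last], by simp [Fin.snoc_last]⟩
    · obtain ⟨idx, h1, h2⟩ := hfv i' (Finset.mem_erase.mpr ⟨hEq, hi'⟩)
      exact ⟨Fin.castSucc idx, by simp [Function.update_of_ne hEq, Fin.snoc_castSucc, h1],
        by simp [Function.update_of_ne hEq, Fin.snoc_castSucc, h2]⟩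
  | all i ψ ih =>
    intro _ hAE j _ vb wb _ σ τ _ _
    obtain ⟨s, hs⟩ := qstrings_nonempty ψ
    exact absurd (List.mem_cons_self (a := false) (l := s)) (hAE (false :: s) ⟨s, hs, rfl⟩)

open Fml in
lemma pi_transfer {W : Type} (r' : W → W → Prop) (emb : W → V)
    (hemb : ∀ a b : W, r' a b ↔ r (emb a) (emb b)) (hinj : Function.Injective emb) :
    ∀ φ : Fml, φ.NegAtomic → AllAll φ → ∀ (σ : ℕ → V) (τ : ℕ → W),
      (∀ i ∈ φ.freeVars, σ i = emb (τ i)) → φ.eval r σ → φ.eval r' τ := by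
  intro φ
  induction φ with
  | eq i i' =>
    intro _ _ σ τ hfv hev
    simp only [Fml.eval] at hev ⊢
    apply hinj
    rw [← hfv i (by simp [freeVars]), ← hfv i' (by simp [freeVars])]
    exact hev
  | rel i i' =>
    intro _ _ σ τ hfv hev
    simp only [Fml.eval] at hev ⊢
    rw [hemb, ← hfv i (by simp [freeVars]), ← hfv i' (by simp [freeVars])]
    exact hev
  | not ψ ih =>
    intro hNA _ σ τ hfv hev
    cases ψ with
    | eq i i' =>
      simp only [Fml.eval] at hev ⊢
      intro hc
      exact hev (by rw [hfv i (by simp [freeVars]), hfv i' (by simp [freeVars]), hc])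
    | rel i i' =>
      simp only [Fml.eval] at hev ⊢
      intro hc
      rw [hemb] at hc
      exact hev (by rw [hfv i (by simp [freeVars]), hfv i' (by simp [freeVars])]; exact hc)
    | _ => simp [Fml.NegAtomic, Fml.IsAtomic] at hNA
  | and ψ χ ih1 ih2 =>
    intro hNA hAA σ τ hfv hev
    simp only [Fml.eval] at hev ⊢
    exact ⟨ih1 hNA.1 (fun s hs => hAA s (Or.inl hs)) σ τ
      (fun i hi => hfv i (by simp [freeVars, hi])) hev.1,
      ih2 hNA.2 (fun s hs => hAA s (Or.inr hs)) σ τ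
      (fun i hi => hfv i (by simp [freeVars, hi])) hev.2⟩
  | or ψ χ ih1 ih2 =>
    intro hNA hAA σ τ hfv hev
    simp only [Fml.eval] at hev ⊢
    rcases hev with hev | hev
    · exact Or.inl (ih1 hNA.1 (fun s hs => hAA s (Or.inl hs)) σ τ
        (fun i hi => hfv i (by simp [freeVars, hi])) hev)
    · exact Or.inr (ih2 hNA.2 (fun s hs => hAA s (Or.inr hs)) σ τ
        (fun i hi => hfv i (by simp [freeVars, hi])) hev)
  | all i ψ ih =>
    intro hNA hAA σ τ hfv hev
    simp only [Fml.eval] at hev ⊢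
    intro b
    refine ih hNA (allAll_of_cons hAA) _ _ ?_ (hev (emb b))
    intro i' hi'
    by_cases hEq : i' = i
    · subst hEq; simp
    · simp only [Function.update_of_ne hEq]
      exact hfv i' (Finset.mem_erase.mpr ⟨hEq, hi'⟩)
  | ex i ψ ih =>
    intro _ hAA σ τ _ _
    obtain ⟨s, hs⟩ := qstrings_nonempty ψ
    exact absurd (List.mem_cons_self (a := true) (l := s)) (hAA (true :: s) ⟨s, hs, rfl⟩)

/-! #### Transfer for 0-alternating sentences to a one-point-deleted substructure -/

open Fml in
lemma zero_alt_transfer {v : V} (hv : v ∉ allR r d d) :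
    ∀ φ : Fml, φ.NegAtomic → φ.AltLe 0 → φ.freeVars = ∅ → φ.depth ≤ d →
      DModels r φ → DModels (fun a b : {x : V // x ≠ v} => r a.1 b.1) φ := by
  intro φ
  induction φ with
  | eq i j => intro _ _ hfv _ _; simp [freeVars] at hfv
  | rel i j => intro _ _ hfv _ _; simp [freeVars] at hfv
  | not ψ ih =>
    intro hNA _ hfv _ _
    exact absurd hfv (freeVars_nonempty_of_atomic ψ hNA)
  | and ψ χ ih1 ih2 =>
    intro hNA hAL hfv hdep hM
    simp only [freeVars, Finset.union_eq_empty] at hfv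
    simp only [Fml.depth, max_le_iff] at hdep
    have h1 := ih1 hNA.1 (fun s hs => hAL s (Or.inl hs)) hfv.1 hdep.1 (fun σ => (hM σ).1)
    have h2 := ih2 hNA.2 (fun s hs => hAL s (Or.inr hs)) hfv.2 hdep.2 (fun σ => (hM σ).2)
    exact fun τ => ⟨h1 τ, h2 τ⟩
  | or ψ χ ih1 ih2 =>
    intro hNA hAL hfv hdep hM
    simp only [freeVars, Finset.union_eq_empty] at hfv
    simp only [Fml.depth, max_le_iff] at hdep
    have h0 := hM (fun _ => Classical.arbitrary V)
    simp only [Fml.eval] at h0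
    rcases h0 with h | h
    · have hMψ : DModels r ψ := fun σ =>
        (eval_congr r ψ _ σ (by simp [hfv.1])).mp h
      exact fun τ => Or.inl (ih1 hNA.1 (fun s hs => hAL s (Or.inl hs)) hfv.1 hdep.1 hMψ τ)
    · have hMχ : DModels r χ := fun σ =>
        (eval_congr r χ _ σ (by simp [hfv.2])).mp h
      exact fun τ => Or.inr (ih2 hNA.2 (fun s hs => hAL s (Or.inr hs)) hfv.2 hdep.2 hMχ τ)
  | ex i ψ ih =>
    intro hNA hAL hfv hdep hM
    have P1 : ∀ (j : ℕ) (vb : Fin j → V) (wb : Fin j → {x : V // x ≠ v}),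
        (j ≤ d ∧ typ r (d - j) j vb = typ r (d - j) j (fun i0 => (wb i0).1) ∧
          (fun i0 => (wb i0).1) ∈ reach r d j) → ∀ a b : Fin j,
        (vb a = vb b ↔ wb a = wb b) ∧ (r (vb a) (vb b) ↔ r (wb a).1 (wb b).1) := by
      intro j vb wb hS a b
      have hat := typ_atomic r (d - j) j vb (fun i0 => (wb i0).1) hS.2.1
      have hspec := atomic_spec r hat a b
      exact ⟨hspec.1.trans Subtype.coe_inj, hspec.2⟩
    have P2 : ∀ (j : ℕ) (vb : Fin j → V) (wb : Fin j → {x : V // x ≠ v}), j < d →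
        (j ≤ d ∧ typ r (d - j) j vb = typ r (d - j) j (fun i0 => (wb i0).1) ∧
          (fun i0 => (wb i0).1) ∈ reach r d j) → ∀ a : V,
        ∃ b : {x : V // x ≠ v}, (j+1 ≤ d ∧
          typ r (d - (j+1)) (j+1) (Fin.snoc vb a) =
            typ r (d - (j+1)) (j+1)
              (fun i0 => ((Fin.snoc wb b : Fin (j+1) → {x : V // x ≠ v}) i0).1) ∧
          (fun i0 => ((Fin.snoc wb b : Fin (j+1) → {x : V // x ≠ v}) i0).1) ∈
            reach r d (j+1)) := by
      intro j vb wb hjD hS a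
      have e : d - j = (d - j - 1) + 1 := by omega
      have hty := hS.2.1
      rw [e] at hty
      obtain ⟨b, htb, hmem⟩ := reach_forth r d rfl hty hS.2.2 a
      have hbv : b ≠ v := by
        intro hbv
        apply hv
        have hmm := mem_allR r d (show j+1 ≤ d by omega) hmem (Fin.last j)
        rw [Fin.snoc_last] at hmm
        rwa [hbv] at hmm
      refine ⟨⟨b, hbv⟩, by omega, ?_, ?_⟩
      · have hcomp : (fun i0 => ((Fin.snoc wb ⟨b, hbv⟩ : Fin (j+1) → {x : V // x ≠ v}) i0).1) =
            Fin.snoc (fun i0 => (wb i0).1) b := by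
          funext i0
          refine Fin.lastCases ?_ ?_ i0
          · simp
          · intro i1; simp
        rw [hcomp, show d - (j+1) = d - j - 1 from by omega]
        exact htb
      · have hcomp : (fun i0 => ((Fin.snoc wb ⟨b, hbv⟩ : Fin (j+1) → {x : V // x ≠ v}) i0).1) =
            Fin.snoc (fun i0 => (wb i0).1) b := by
          funext i0
          refine Fin.lastCases ?_ ?_ i0
          · simp
          · intro i1; simp
        rw [hcomp]
        exact hmem
    have hS0 : (0 ≤ d ∧
        typ r (d - 0) 0 (fun i0 : Fin 0 => i0.elim0) =
          typ r (d - 0) 0 (fun i0 => ((fun i0 : Fin 0 => i0.elim0 :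
            Fin 0 → {x : V // x ≠ v}) i0).1) ∧
        (fun i0 => ((fun i0 : Fin 0 => i0.elim0 : Fin 0 → {x : V // x ≠ v}) i0).1) ∈
          reach r d 0) := by
      refine ⟨Nat.zero_le d, ?_, ?_⟩
      · exact congrArg (typ r (d - 0) 0) (funext fun i0 => i0.elim0)
      · exact Finset.mem_univ _
    intro τ
    exact sigma_transfer r (fun a b : {x : V // x ≠ v} => r a.1 b.1) d
      (fun j vb wb => j ≤ d ∧ typ r (d - j) j vb = typ r (d - j) j (fun i0 => (wb i0).1) ∧
        (fun i0 => (wb i0).1) ∈ reach r d j) P1 P2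
      (Fml.ex i ψ) hNA (allEx_of_zeroAlt_ex hAL) 0 (by simpa using hdep)
      _ _ hS0 (fun _ => Classical.arbitrary V) τ (by simp [hfv]) (hM _)
  | all i ψ ih =>
    intro hNA hAL hfv hdep hM τ
    exact pi_transfer r (fun a b : {x : V // x ≠ v} => r a.1 b.1) Subtype.val
      (fun a b => Iff.rfl) Subtype.val_injective (Fml.all i ψ) hNA
      (allAll_of_zeroAlt_all hAL) (fun n => (τ n).1) τ (fun i' hi' => rfl) (hM _)

/-! #### Counting -/

lemma card_fun2 (j : ℕ) : Fintype.card (Fin j → Fin j → Bool × Bool) = 4 ^ (j*j) := by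
  rw [Fintype.card_fun, Fintype.card_fun, Fintype.card_prod, Fintype.card_bool,
    Fintype.card_fin, ← pow_mul]

lemma card_TS_zero_le {j m : ℕ} (hj : j ≤ m) :
    Fintype.card (TS 0 j) ≤ 2 ^ (2 * (m*m)) := by
  have h : Fintype.card (TS 0 j) = Fintype.card (Fin j → Fin j → Bool × Bool) :=
    Fintype.card_congr (Equiv.refl _)
  rw [h, card_fun2]
  calc (4:ℕ) ^ (j*j) ≤ 4 ^ (m*m) := Nat.pow_le_pow_right (by norm_num) (Nat.mul_le_mul hj hj)
    _ = 2 ^ (2 * (m*m)) := by rw [show (4:ℕ) = 2^2 from rfl, ← pow_mul]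

lemma card_TS_succ (k j : ℕ) :
    Fintype.card (TS (k+1) j) = 4 ^ (j*j) * 2 ^ (Fintype.card (TS k (j+1))) := by
  have h : Fintype.card (TS (k+1) j) =
      Fintype.card ((Fin j → Fin j → Bool × Bool) × (TS k (j+1) → Bool)) :=
    Fintype.card_congr (Equiv.refl _)
  rw [h, Fintype.card_prod, card_fun2, Fintype.card_fun, Fintype.card_bool]

lemma card_TS_le {d : ℕ} (hd : 1 ≤ d) : ∀ k j, j + k ≤ d →
    Fintype.card (TS k j) + (2 * (d*d) + 1) ≤ expIter k (2 ^ (3 * (d*d))) := by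
  intro k
  induction k with
  | zero =>
    intro j hj
    have h1 : Fintype.card (TS 0 j) ≤ 2 ^ (2*(d*d)) := card_TS_zero_le (by omega)
    have h2 : 2*(d*d) + 1 ≤ 2 ^ (2*(d*d)) := Nat.lt_two_pow_self (n := 2*(d*d))
    have h3 : (2:ℕ) ^ (2*(d*d)) + 2 ^ (2*(d*d)) = 2 ^ (2*(d*d)+1) := by ring
    have h4 : 2*(d*d)+1 ≤ 3*(d*d) := by nlinarith
    have h5 : (2:ℕ) ^ (2*(d*d)+1) ≤ 2 ^ (3*(d*d)) := Nat.pow_le_pow_right (by norm_num) h4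
    show Fintype.card (TS 0 j) + (2 * (d*d) + 1) ≤ 2 ^ (3 * (d*d))
    omega
  | succ k ih =>
    intro j hj
    have hc := card_TS_succ k j
    have ihh := ih (j+1) (by omega)
    have h1 : (4:ℕ) ^ (j*j) ≤ 2 ^ (2*(d*d)) := by
      calc (4:ℕ) ^ (j*j) ≤ 4 ^ (d*d) :=
            Nat.pow_le_pow_right (by norm_num) (Nat.mul_le_mul (by omega) (by omega))
        _ = 2 ^ (2*(d*d)) := by rw [show (4:ℕ) = 2^2 from rfl, ← pow_mul]
    have h2 : Fintype.card (TS (k+1) j) ≤ 2 ^ (2*(d*d) + Fintype.card (TS k (j+1))) := by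
      rw [hc, pow_add]
      exact Nat.mul_le_mul_right _ h1
    have h3 : 2*(d*d) + 1 ≤ 2 ^ (2*(d*d) + Fintype.card (TS k (j+1))) := by
      have : 2*(d*d) + 1 ≤ 2 ^ (2*(d*d)) := Nat.lt_two_pow_self (n := 2*(d*d))
      have hmono : (2:ℕ) ^ (2*(d*d)) ≤ 2 ^ (2*(d*d) + Fintype.card (TS k (j+1))) :=
        Nat.pow_le_pow_right (by norm_num) (by omega)
      omega
    have h4 : (2:ℕ) ^ (2*(d*d) + Fintype.card (TS k (j+1))) +
        2 ^ (2*(d*d) + Fintype.card (TS k (j+1))) =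
        2 ^ (2*(d*d) + Fintype.card (TS k (j+1)) + 1) := by ring
    have h5 : 2*(d*d) + Fintype.card (TS k (j+1)) + 1 ≤ expIter k (2 ^ (3*(d*d))) := by omega
    have h6 : (2:ℕ) ^ (2*(d*d) + Fintype.card (TS k (j+1)) + 1) ≤
        2 ^ expIter k (2 ^ (3*(d*d))) := Nat.pow_le_pow_right (by norm_num) h5
    show Fintype.card (TS (k+1) j) + (2 * (d*d) + 1) ≤ 2 ^ expIter k (2 ^ (3 * (d*d)))
    omega

variable {V : Type} (r : V → V → Prop) [Fintype V] [Nonempty V]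

lemma card_reach_le {d : ℕ} (hd : 1 ≤ d) : ∀ j, j ≤ d →
    (reach r d j).card ≤ (expIter (d-1) (2 ^ (3*(d*d)))) ^ j := by
  intro j
  induction j with
  | zero =>
    intro _
    have : (reach r d 0).card = Fintype.card (Fin 0 → V) := Finset.card_univ
    rw [this, Fintype.card_fun]
    simp
  | succ j ih =>
    intro hj
    have hR1 : (1:ℕ) ≤ expIter (d-1) (2 ^ (3*(d*d))) :=
      one_le_expIter _ Nat.one_le_two_pow
    have hTS : Fintype.card (TS (d - j - 1) (j+1)) ≤ expIter (d-1) (2 ^ (3*(d*d))) := by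
      have h1 := card_TS_le hd (d - j - 1) (j+1) (by omega)
      have h2 : expIter (d-j-1) (2 ^ (3*(d*d))) ≤ expIter (d-1) (2 ^ (3*(d*d))) :=
        expIter_mono_k (by omega) _
      omega
    have hb : (reach r d (j+1)).card ≤
        (reach r d j).card * Fintype.card (TS (d - j - 1) (j+1)) := by
      have h1 : reach r d (j+1) = (reach r d j).biUnion fun w =>
          Finset.image (fun t : TS (d - j - 1) (j+1) =>
            Fin.snoc w (resp r (d - j - 1) j w t)) Finset.univ := rfl
      rw [h1]
      refine le_trans (Finset.card_biUnion_le) ?_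
      refine le_trans (Finset.sum_le_card_nsmul _ _ (Fintype.card (TS (d - j - 1) (j+1)))
        fun w _ => ?_) (by rw [smul_eq_mul])
      exact le_trans (Finset.card_image_le) (by rw [Finset.card_univ])
    calc (reach r d (j+1)).card ≤
        (reach r d j).card * Fintype.card (TS (d - j - 1) (j+1)) := hb
      _ ≤ (expIter (d-1) (2 ^ (3*(d*d)))) ^ j * expIter (d-1) (2 ^ (3*(d*d))) :=
          Nat.mul_le_mul (ih (by omega)) hTS
      _ = (expIter (d-1) (2 ^ (3*(d*d)))) ^ (j+1) := by rw [pow_succ]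

lemma card_allR_le {d : ℕ} (hd : 1 ≤ d) : ∀ j, j ≤ d →
    (allR r d j).card ≤ j * j * (expIter (d-1) (2 ^ (3*(d*d)))) ^ j := by
  intro j
  induction j with
  | zero => intro _; simp [allR]
  | succ j ih =>
    intro hj
    have hR1 : (1:ℕ) ≤ expIter (d-1) (2 ^ (3*(d*d))) :=
      one_le_expIter _ Nat.one_le_two_pow
    have h1 : (allR r d (j+1)).card ≤ (allR r d j).card +
        (reach r d (j+1)).card * (j+1) := by
      have he : allR r d (j+1) = allR r d j ∪
          (reach r d (j+1)).biUnion fun w => Finset.image w Finset.univ := rfl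
      rw [he]
      refine le_trans (Finset.card_union_le _ _) ?_
      have h2 : ((reach r d (j+1)).biUnion fun w => Finset.image w Finset.univ).card ≤
          (reach r d (j+1)).card * (j+1) := by
        refine le_trans (Finset.card_biUnion_le) ?_
        refine le_trans (Finset.sum_le_card_nsmul _ _ (j+1) fun w _ => ?_)
          (by rw [smul_eq_mul])
        exact le_trans (Finset.card_image_le) (by simp)
      omega
    have h3 := ih (by omega)
    have h4 := card_reach_le r hd (j+1) hj
    set R := expIter (d-1) (2 ^ (3*(d*d))) with hR
    have h5 : R ^ j ≤ R ^ (j+1) := Nat.pow_le_pow_right hR1 (by omega)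
    have h6 : j * j * R ^ j ≤ j * j * R ^ (j+1) := Nat.mul_le_mul_left _ h5
    have h7 : (reach r d (j+1)).card * (j+1) ≤ R ^ (j+1) * (j+1) :=
      Nat.mul_le_mul_right _ h4
    have h8 : j * j * R ^ (j+1) + R ^ (j+1) * (j+1) ≤ (j+1) * (j+1) * R ^ (j+1) := by
      nlinarith
    omega

lemma four_mul_le : ∀ m : ℕ, 1 ≤ m → 4 * m ≤ 2 ^ (2 * m) := by
  intro m
  induction m with
  | zero => omega
  | succ m ih =>
    intro _
    rcases Nat.eq_zero_or_pos m with rfl | hm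
    · norm_num
    · have h1 := ih hm
      have h2 : (2:ℕ) ^ (2 * (m+1)) = 4 * 2 ^ (2*m) := by
        rw [show 2*(m+1) = 2*m + 2 from by omega, pow_add]; ring
      have h3 : (4:ℕ) ≤ 2^(2*m) := by
        calc (4:ℕ) = 2^(2*1) := by norm_num
          _ ≤ 2^(2*m) := Nat.pow_le_pow_right (by norm_num) (by omega)
      omega

lemma final_bound (d : ℕ) (hd : 1 ≤ d) :
    d * d * (expIter (d-1) (2 ^ (3*(d*d)))) ^ d + 1 ≤ expIter (d-1) (2 ^ (5*(d*d))) := by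
  match d, hd with
  | 1, _ => norm_num [expIter]
  | (k+2), _ =>
    set d := k + 2 with hdd
    have hd2 : 2 ≤ d := by omega
    set X : ℕ := 2 ^ (3*(d*d)) with hX
    have hX1 : 1 ≤ X := Nat.one_le_two_pow
    set E : ℕ := expIter k X with hE
    have h0 : expIter (d-1) X = 2 ^ E := rfl
    have h1 : (expIter (d-1) X) ^ d = 2 ^ (E * d) := by rw [h0, ← pow_mul]
    have h2 : d * d + 1 ≤ 2 ^ (2*(d*d)) := by
      have := Nat.lt_two_pow_self (n := d*d)
      have hmono : (2:ℕ)^(d*d) ≤ 2^(2*(d*d)) := Nat.pow_le_pow_right (by norm_num) (by omega)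
      omega
    have h3 : d * d * (expIter (d-1) X) ^ d + 1 ≤ 2 ^ (E * d + 2*(d*d)) := by
      rw [h1, pow_add]
      have : d * d * 2 ^ (E*d) + 1 ≤ (d*d+1) * 2^(E*d) := by
        have hp : (1:ℕ) ≤ 2 ^ (E*d) := Nat.one_le_two_pow
        nlinarith
      calc d * d * 2 ^ (E*d) + 1 ≤ (d*d+1) * 2^(E*d) := this
        _ ≤ 2^(2*(d*d)) * 2^(E*d) := Nat.mul_le_mul_right _ h2
        _ = 2 ^ (E*d) * 2^(2*(d*d)) := by ring
    have h4 : E * d + 2*(d*d) ≤ expIter k ((d + 2*(d*d) + 2) * X) := by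
      have hm := mul_expIter_add_le k X d (2*(d*d)) hX1
      rw [← hE] at hm
      have hcomm : E * d = d * E := Nat.mul_comm _ _
      omega
    have h5 : (d + 2*(d*d) + 2) * X ≤ 2 ^ (5*(d*d)) := by
      have ha : d + 2*(d*d) + 2 ≤ 4 * (d*d) := by nlinarith
      have hb : 4 * (d*d) ≤ 2 ^ (2*(d*d)) := four_mul_le (d*d) (by nlinarith)
      calc (d + 2*(d*d) + 2) * X ≤ 2 ^ (2*(d*d)) * X := Nat.mul_le_mul_right _ (by omega)
        _ = 2 ^ (2*(d*d)) * 2 ^ (3*(d*d)) := by rw [hX]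
        _ = 2 ^ (5*(d*d)) := by rw [← pow_add]; congr 1; ring
    have h6 : expIter k ((d + 2*(d*d) + 2) * X) ≤ expIter k (2 ^ (5*(d*d))) :=
      expIter_mono_arg _ h5
    have h7 : E * d + 2*(d*d) ≤ expIter k (2 ^ (5*(d*d))) := by omega
    have h8 : (2:ℕ) ^ (E * d + 2*(d*d)) ≤ 2 ^ expIter k (2 ^ (5*(d*d))) :=
      Nat.pow_le_pow_right (by norm_num) h7
    show d * d * (expIter (d-1) X) ^ d + 1 ≤ 2 ^ expIter k (2 ^ (5*(d*d)))
    omega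

/-! #### The main cardinality bound -/

lemma main_bound {φ : Fml} (hφ : φ.ZeroAlt) (hdef : DDefines r φ) :
    Fintype.card V ≤ (allR r φ.depth φ.depth).card + 1 := by
  by_contra hlt
  push_neg at hlt
  set d := φ.depth with hd
  have hex : ∃ v : V, v ∉ allR r d d := by
    by_contra hall
    push_neg at hall
    have hsub : (Finset.univ : Finset V) ⊆ allR r d d := fun x _ => hall x
    have := Finset.card_le_card hsub
    rw [Finset.card_univ] at this
    omega
  obtain ⟨v, hv⟩ := hex
  have hn2 : 2 ≤ Fintype.card V := by omega
  have hnt : Nontrivial V := Fintype.one_lt_card_iff_nontrivial.mp (by omega)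
  obtain ⟨u, hu⟩ := exists_ne v
  have hW : Nonempty {x : V // x ≠ v} := ⟨⟨u, hu⟩⟩
  have hM' : DModels (fun a b : {x : V // x ≠ v} => r a.1 b.1) φ :=
    zero_alt_transfer r d hv φ hφ.1 hφ.2 hdef.1 le_rfl hdef.2.1
  have hcard : Fintype.card {x : V // x ≠ v} = Fintype.card V - 1 := by
    rw [Fintype.card_subtype, Finset.filter_ne', Finset.card_erase_of_mem (Finset.mem_univ v),
      Finset.card_univ]
  have hniso : ¬ DIso r (fun a b : {x : V // x ≠ v} => r a.1 b.1) := by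
    rintro ⟨e, -⟩
    have hc := Fintype.card_congr e
    rw [hcard] at hc
    omega
  exact hdef.2.2 {x : V // x ≠ v} inferInstance hW _ hniso hM'

end Aux2


theorem statement_2 {V : Type} [Fintype V] [Nonempty V] (r : V → V → Prop)
    (φ : Fml) (hφ : φ.ZeroAlt) (hdef : DDefines r φ) :
    logStar (Fintype.card V) ≤ φ.depth + logStar (logStar (Fintype.card V)) + 1 := by
  classical
  set d := φ.depth with hd
  have hd1 : 1 ≤ d := one_le_depth_of_sentence φ hdef.1
  have hmb : Fintype.card V ≤ (allR r d d).card + 1 := main_bound r hφ hdef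
  have hcr := card_allR_le r hd1 d le_rfl
  have hfin := final_bound d hd1
  have hn : Fintype.card V ≤ expIter (d-1) (2 ^ (5*(d*d))) := by omega
  have hls : logStar (Fintype.card V) ≤ d + logStar (5*(d*d)) := by
    have h1 := logStar_mono hn
    have h2 := logStar_expIter (d-1) (2 ^ (5*(d*d)))
    have h3 := logStar_two_pow (5*(d*d))
    omega
  have h4 : logStar (5*(d*d)) ≤ logStar (d+2) + 1 := by
    have := logStar_five_sq d hd1
    rw [show 5*d*d = 5*(d*d) from by ring] at this
    exact this
  by_cases hc : logStar (Fintype.card V) ≤ d + 1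
  · omega
  · have hL : d + 2 ≤ logStar (Fintype.card V) := by omega
    have h5 : logStar (d+2) ≤ logStar (logStar (Fintype.card V)) := logStar_mono hL
    omega


end PaperFO
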